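/- Let n be a natural number and let A be an n × n matrix over ZMod 2 that is strictly upper triangular (A i j = 0 whenever j ≤ i). Then for any two disjoint finite subsets S and T of Fin n, the family of vectors in (Fin n → ZMod 2) consisting of the standard basis vectors e_i = Pi.single i 1 for i ∈ S, together with the columns of the matrix 1 + Aᵀ indexed by j ∈ T (i.e. the vectors (fun k => (1 + Aᵀ) k j) for j ∈ T), is linearly independent over ZMod 2. -/

import Mathlib

open Matrix in
theorem real_bott_characteristic_nonsingular
    (n : ℕ) (A : Matrix (Fin n) (Fin n) (ZMod 2))
    (hA : ∀ i j : Fin n, j ≤ i → A i j = 0)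
    (S T : Finset (Fin n)) (hST : Disjoint S T) :
    LinearIndependent (ZMod 2)
      (Sum.elim
        (fun i : ↥S => Pi.single (i : Fin n) (1 : ZMod 2))
        (fun j : ↥T => fun k : Fin n => (1 + A.transpose) k (j : Fin n))) := by
  classical
  -- The matrix C : columns indexed by j; column j is e_j if j ∉ T, else (1+Aᵀ) column j.
  set C : Matrix (Fin n) (Fin n) (ZMod 2) :=
    fun k j => (1 : Matrix (Fin n) (Fin n) (ZMod 2)) k j +
      (if j ∈ T then A.transpose k j else 0) with hC
  -- C is lower triangular with ones on diagonal, hence det C = 1.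
  have htri : C.BlockTriangular OrderDual.toDual := by
    intro i j h
    have hij : i < j := h
    have : A j i = 0 := hA j i hij.le
    simp [hC, Matrix.one_apply, hij.ne, Matrix.transpose_apply, this]
  have hdet : C.det = 1 := by
    rw [Matrix.det_of_lowerTriangular C htri]
    apply Finset.prod_eq_one
    intro i _
    have : A i i = 0 := hA i i le_rfl
    simp [hC, Matrix.one_apply, Matrix.transpose_apply, this]
  have hunit : IsUnit C := by
    have := Matrix.isUnit_iff_isUnit_det C
    rw [this, hdet]; exact isUnit_one
  have hli : LinearIndependent (ZMod 2) (fun j => Cᵀ j) :=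
    Matrix.linearIndependent_cols_iff_isUnit.mpr hunit
  -- Our family equals columns of C composed with the injection S ⊕ T → Fin n.
  have key : (Sum.elim
        (fun i : ↥S => Pi.single (i : Fin n) (1 : ZMod 2))
        (fun j : ↥T => fun k : Fin n => (1 + A.transpose) k (j : Fin n)))
      = (fun j => Cᵀ j) ∘ (Sum.elim (fun i : ↥S => (i : Fin n)) (fun j : ↥T => (j : Fin n))) := by
    funext x
    cases x with
    | inl i =>
        have hiT : (i : Fin n) ∉ T := Finset.disjoint_left.mp hST i.2
        funext k
        simp [hC, Matrix.transpose_apply, hiT, Matrix.one_apply, Pi.single_apply, eq_comm, Matrix.transpose, Matrix.of_apply]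
    | inr j =>
        funext k
        simp [hC, Matrix.transpose_apply, j.2, Matrix.add_apply, Matrix.transpose, Matrix.of_apply]
  rw [key]
  apply hli.comp
  intro x y hxy
  cases x with
  | inl i =>
    cases y with
    | inl i' => simp only [Sum.elim_inl] at hxy; exact congrArg Sum.inl (Subtype.ext hxy)
    | inr j =>
      simp only [Sum.elim_inl, Sum.elim_inr] at hxy
      exact (Finset.disjoint_left.mp hST i.2 (hxy ▸ j.2)).elim
  | inr j =>
    cases y with
    | inl i =>
      simp only [Sum.elim_inl, Sum.elim_inr] at hxy
      exact (Finset.disjoint_left.mp hST i.2 (hxy.symm ▸ j.2)).elim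
    | inr j' => simp only [Sum.elim_inr] at hxy; exact congrArg Sum.inr (Subtype.ext hxy)
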